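/- Let A and B be positive-definite Hermitian n×n complex matrices, let H be the Hermitian matrix with A^{−1/2} B A^{−1/2} = exp(H), and define O(t) = A^{1/2} exp(tH) A^{1/2} for t ∈ [0,1]. Then O(0) = A, O(1) = B, each O(t) is positive-definite Hermitian, O is differentiable, and for every t ∈ [0,1] one has tr(O(t)^{−1} O'(t) O(t)^{−1} O'(t)) = tr(H²). -/

import Mathlib

open Matrix NormedSpace
open scoped ComplexOrder

attribute [local instance] Matrix.frobeniusNormedAddCommGroup Matrix.frobeniusNormedSpace

/-- The square root of a positive semidefinite matrix, as defined in Mathlib (Dec 2024). -/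
noncomputable def Matrix.PosSemidef.sqrt {n : Type*} [Fintype n] [DecidableEq n] {𝕜 : Type*}
    [RCLike 𝕜] {A : Matrix n n 𝕜} (hA : A.PosSemidef) : Matrix n n 𝕜 :=
  hA.1.eigenvectorUnitary.1 * diagonal ((↑) ∘ Real.sqrt ∘ hA.1.eigenvalues) *
  (star hA.1.eigenvectorUnitary : Matrix n n 𝕜)

lemma GeodesicAux.sqrt_mul_self {n : ℕ} {A : Matrix (Fin n) (Fin n) ℂ} (hA : A.PosSemidef) :
    hA.sqrt * hA.sqrt = A := by
  have hU : (star hA.1.eigenvectorUnitary : Matrix (Fin n) (Fin n) ℂ) *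
      hA.1.eigenvectorUnitary.1 = 1 := Unitary.coe_star_mul_self _
  unfold Matrix.PosSemidef.sqrt
  conv_rhs => rw [hA.1.spectral_theorem, Unitary.conjStarAlgAut_apply]
  calc _ = hA.1.eigenvectorUnitary.1 * (diagonal ((↑) ∘ Real.sqrt ∘ hA.1.eigenvalues) *
        ((star hA.1.eigenvectorUnitary : Matrix (Fin n) (Fin n) ℂ) * hA.1.eigenvectorUnitary.1) *
        diagonal ((↑) ∘ Real.sqrt ∘ hA.1.eigenvalues)) *
        (star hA.1.eigenvectorUnitary : Matrix (Fin n) (Fin n) ℂ) := by simp only [Matrix.mul_assoc]; rfl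
    _ = _ := by
      rw [hU, Matrix.mul_one, diagonal_mul_diagonal]
      congr 3
      funext i
      simp only [Function.comp_apply]
      rw [← Complex.ofReal_mul, Real.mul_self_sqrt (hA.eigenvalues_nonneg i)]
      rfl

lemma GeodesicAux.sqrt_isHermitian {n : ℕ} {A : Matrix (Fin n) (Fin n) ℂ} (hA : A.PosSemidef) :
    hA.sqrt.IsHermitian := by
  unfold Matrix.PosSemidef.sqrt
  simp [Matrix.IsHermitian, conjTranspose_mul, Matrix.mul_assoc, diagonal_conjTranspose]
  simp [← Matrix.star_eq_conjTranspose, Pi.star_def, Function.comp_def, Complex.conj_ofReal]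

namespace GeodesicAux

variable {n : ℕ}

lemma posDef_conj {M B : Matrix (Fin n) (Fin n) ℂ} (hM : M.PosDef) (hB : IsUnit B) :
    (Bᴴ * M * B).PosDef := by
  refine Matrix.PosDef.of_dotProduct_mulVec_pos (Matrix.isHermitian_conjTranspose_mul_mul B hM.1) fun x hx => ?_
  have hinj : Function.Injective (B.mulVec) := Matrix.mulVec_injective_iff_isUnit.mpr hB
  have hBx : B *ᵥ x ≠ 0 := fun h => hx (hinj (by simpa using h))
  have := hM.dotProduct_mulVec_pos hBx
  simpa only [star_mulVec, dotProduct_mulVec, Matrix.vecMul_vecMul] using this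

lemma smul_real_isHermitian {H : Matrix (Fin n) (Fin n) ℂ} (hH : H.IsHermitian) (c : ℂ)
    (hc : star c = c) : (c • H).IsHermitian := by
  rw [Matrix.IsHermitian, Matrix.conjTranspose_smul, hH.eq, hc]

lemma exp_posDef {M : Matrix (Fin n) (Fin n) ℂ} (hM : M.IsHermitian) : (exp M).PosDef := by
  have hc : star ((1:ℂ)/2) = (1:ℂ)/2 := by norm_num
  have hF : (exp (((1:ℂ)/2) • M)).IsHermitian :=
    Matrix.IsHermitian.exp (smul_real_isHermitian hM _ hc)
  have key : exp M = (exp (((1:ℂ)/2) • M))ᴴ * 1 * (exp (((1:ℂ)/2) • M)) := by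
    rw [Matrix.mul_one, hF.eq, ← Matrix.exp_add_of_commute _ _ (Commute.refl _), ← add_smul]
    norm_num
  rw [key]
  exact posDef_conj Matrix.PosDef.one (Matrix.isUnit_exp _)

end GeodesicAux

section Deriv
attribute [local instance] Matrix.frobeniusNormedRing Matrix.frobeniusNormedAlgebra

lemma GeodesicAux.hasDerivAt_path {n : ℕ} (S H : Matrix (Fin n) (Fin n) ℂ) (t : ℝ) :
    HasDerivAt (fun u : ℝ => S * exp ((u:ℂ) • H) * S)
      (S * (exp ((t:ℂ) • H) * H) * S) t := by
  have hcast : ∀ u : ℝ, (u:ℂ) • H = u • H := by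
    intro u; ext i j; simp [Matrix.smul_apply, Complex.real_smul]
  have hee : (exp : Matrix (Fin n) (Fin n) ℂ → _) = exp := rfl
  have h1 : HasDerivAt (fun u : ℝ => exp (u • H)) (exp (t • H) * H) t :=
    hasDerivAt_exp_smul_const H t
  have h2 : HasDerivAt (fun u : ℝ => S * exp (u • H) * S)
      (S * (exp (t • H) * H) * S) t := by
    have h := (h1.const_mul S).mul_const S
    exact h
  simpa [hee, hcast] using h2

end Deriv

/-- **Constant-speed geodesic between positive-definite matrices.**
With `H = log(A^{−1/2} B A^{−1/2})` the Hermitian logarithm, the path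
`O t = A^{1/2} exp(tH) A^{1/2}` runs from `A` to `B` through positive-definite
Hermitian matrices, is differentiable, and has constant speed
`tr(O⁻¹O'O⁻¹O') = tr(H²)` in the metric `g_O(X,Y) = tr(O⁻¹XO⁻¹Y)`. -/
theorem geodesic_path_constant_speed
    (n : ℕ) (A B : Matrix (Fin n) (Fin n) ℂ)
    (hA : A.PosDef) (hB : B.PosDef)
    (H : Matrix (Fin n) (Fin n) ℂ) (hH : H.IsHermitian)
    (hHlog : hA.posSemidef.sqrt⁻¹ * B * hA.posSemidef.sqrt⁻¹ = exp H)
    (O : ℝ → Matrix (Fin n) (Fin n) ℂ)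
    (hO : O = fun t : ℝ => hA.posSemidef.sqrt * exp ((t : ℂ) • H) * hA.posSemidef.sqrt) :
    O 0 = A ∧ O 1 = B ∧
    (∀ t ∈ Set.Icc (0:ℝ) 1, (O t).PosDef ∧ (O t).IsHermitian) ∧
    Differentiable ℝ O ∧
    (∀ t ∈ Set.Icc (0:ℝ) 1,
      Matrix.trace ((O t)⁻¹ * deriv O t * (O t)⁻¹ * deriv O t) =
        Matrix.trace (H * H)) := by
  set S := hA.posSemidef.sqrt with hSdef
  have hSS : S * S = A := GeodesicAux.sqrt_mul_self hA.posSemidef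
  have hSHerm : S.IsHermitian := GeodesicAux.sqrt_isHermitian hA.posSemidef
  have hSdet : IsUnit S.det := by
    have : S.det * S.det = A.det := by rw [← Matrix.det_mul, hSS]
    have hAdet : A.det ≠ 0 := hA.det_pos.ne'
    exact isUnit_iff_ne_zero.mpr (fun h => hAdet (by rw [← this, h, zero_mul]))
  have hSunit : IsUnit S := (Matrix.isUnit_iff_isUnit_det S).mpr hSdet
  have hSinv : S * S⁻¹ = 1 := Matrix.mul_nonsing_inv S hSdet
  have hSinv' : S⁻¹ * S = 1 := Matrix.nonsing_inv_mul S hSdet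
  -- Hermitianness of t • H
  have htH : ∀ t : ℝ, ((t : ℂ) • H).IsHermitian := fun t =>
    GeodesicAux.smul_real_isHermitian hH _ (by simp)
  -- positivity of O t
  have hOt : ∀ t : ℝ, (O t).PosDef := by
    intro t
    have : (Sᴴ * exp ((t:ℂ) • H) * S).PosDef :=
      GeodesicAux.posDef_conj (GeodesicAux.exp_posDef (htH t)) hSunit
    rw [hSHerm.eq] at this
    rw [hO]
    exact this
  -- endpoints
  have hO0 : O 0 = A := by
    rw [hO]
    simp only [Complex.ofReal_zero, zero_smul, exp_zero, Matrix.mul_one]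
    exact hSS
  have hO1 : O 1 = B := by
    rw [hO]
    simp only [Complex.ofReal_one, one_smul, ← hHlog]
    rw [show S * (S⁻¹ * B * S⁻¹) * S = (S * S⁻¹) * B * (S⁻¹ * S) by noncomm_ring, hSinv, hSinv']
    simp
  -- derivative
  have hderiv : ∀ t : ℝ, HasDerivAt O (S * (exp ((t:ℂ) • H) * H) * S) t := by
    intro t
    rw [hO]
    exact GeodesicAux.hasDerivAt_path S H t
  refine ⟨hO0, hO1, fun t _ => ⟨hOt t, (hOt t).1⟩, fun t => (hderiv t).differentiableAt, ?_⟩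
  intro t _
  have hDeriv : deriv O t = S * (exp ((t:ℂ) • H) * H) * S := (hderiv t).deriv
  set E := exp ((t:ℂ) • H) with hEdef
  have hOtu : IsUnit (O t) := (hOt t).isUnit
  letI := hOtu.invertible
  have hOinv : (O t)⁻¹ * deriv O t = S⁻¹ * H * S := by
    rw [Matrix.inv_mul_eq_iff_eq_mul_of_invertible, hDeriv, hO]
    rw [show S * E * S * (S⁻¹ * H * S) = S * E * ((S * S⁻¹) * (H * S)) by noncomm_ring, hSinv]
    noncomm_ring
  have : (O t)⁻¹ * deriv O t * (O t)⁻¹ * deriv O t = S⁻¹ * (H * H * S) := by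
    rw [Matrix.mul_assoc ((O t)⁻¹ * deriv O t), hOinv]
    calc S⁻¹ * H * S * (S⁻¹ * H * S) = S⁻¹ * (H * ((S * S⁻¹) * (H * S))) := by noncomm_ring
    _ = S⁻¹ * (H * H * S) := by rw [hSinv]; noncomm_ring
  rw [this, Matrix.trace_mul_comm, Matrix.mul_assoc, hSinv, Matrix.mul_one]
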